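/- Let μ₁, μ₂ ∈ ℝ and let X and Y be independent real random variables with X distributed according to the Gaussian measure with mean μ₁ and variance 1/2 and Y distributed according to the Gaussian measure with mean μ₂ and variance 1/2. Then E[ sgn(X) · sgn(Y) ] = Φ(μ₁) · Φ(μ₂). -/

import Mathlib

open MeasureTheory ProbabilityTheory
open scoped NNReal

/-- The error function `Φ(x) = (2/√π) ∫₀ˣ exp(−t²) dt`. -/
noncomputable def erf (x : ℝ) : ℝ :=
  2 / Real.sqrt Real.pi * ∫ t in (0 : ℝ)..x, Real.exp (-t ^ 2)

lemma measurable_realSign : Measurable Real.sign := by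
  have : Real.sign = fun r : ℝ => if r < 0 then (-1 : ℝ) else if 0 < r then 1 else 0 :=
    funext fun r => rfl
  rw [this]
  exact Measurable.ite measurableSet_Iio measurable_const
    (Measurable.ite measurableSet_Ioi measurable_const measurable_const)

lemma integrable_g : Integrable (fun x : ℝ => Real.exp (-x ^ 2)) := by
  have := integrable_exp_neg_mul_sq (b := 1) one_pos
  simpa using this

lemma integral_g : ∫ x : ℝ, Real.exp (-x ^ 2) = Real.sqrt Real.pi := by
  have := integral_gaussian 1
  simpa using this

lemma integral_g_Iic : ∫ x in Set.Iic (0:ℝ), Real.exp (-x ^ 2) = Real.sqrt Real.pi / 2 := by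
  have h1 := integral_comp_neg_Ioi (0:ℝ) (fun x => Real.exp (-x ^ 2))
  have h2 : ∫ x in Set.Ioi (0:ℝ), Real.exp (-x ^ 2) = Real.sqrt Real.pi / 2 := by
    have := integral_gaussian_Ioi 1
    simpa using this
  simp only [neg_zero, even_two.neg_pow] at h1
  rw [← h1, h2]

lemma integral_sign_gaussian (μ : ℝ) :
    ∫ x, Real.sign x ∂(gaussianReal μ (1 / 2)) = erf μ := by
  have hv : ((1 : ℝ≥0) / 2) ≠ 0 := by norm_num
  set g : ℝ → ℝ := fun x => Real.exp (-x ^ 2) with hg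
  have hc : (((1:ℝ≥0)/2 : ℝ≥0) : ℝ) = 1/2 := by norm_num
  have hpdf : ∀ x, gaussianPDFReal μ (1/2) x = (Real.sqrt Real.pi)⁻¹ * g (x - μ) := by
    intro x
    simp only [gaussianPDFReal, hg, hc]
    rw [show 2 * Real.pi * (1/2) = Real.pi by ring,
      show -(x - μ) ^ 2 / (2 * (1/2)) = -(x - μ) ^ 2 by ring]
  -- rewrite the integral against density
  have h1 : ∫ x, Real.sign x ∂(gaussianReal μ (1 / 2))
      = ∫ x, (Real.sqrt Real.pi)⁻¹ * g (x - μ) * Real.sign x := by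
    rw [gaussianReal_of_var_ne_zero μ hv, gaussianPDF_def]
    have : (fun x => ENNReal.ofReal (gaussianPDFReal μ (1/2) x))
        = fun x => ((gaussianPDFReal μ (1/2) x).toNNReal : ENNReal) := rfl
    rw [this, integral_withDensity_eq_integral_smul
      ((measurable_gaussianPDFReal μ (1/2)).real_toNNReal) Real.sign]
    congr 1
    ext x
    rw [NNReal.smul_def, smul_eq_mul, Real.coe_toNNReal _ (gaussianPDFReal_nonneg μ _ x), hpdf x]
  rw [h1]
  have hb : ∀ y : ℝ, ‖Real.sign y‖ ≤ 1 := by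
    intro y
    rcases lt_trichotomy y 0 with h|h|h
    · simp [Real.sign_of_neg h]
    · simp [h]
    · simp [Real.sign_of_pos h]
  have hK_int : Integrable (fun x => Real.sign (x + μ) * g x) :=
    integrable_g.bdd_mul
      ((measurable_realSign.comp (measurable_id.add_const μ)).aestronglyMeasurable)
      (c := 1) (Filter.Eventually.of_forall fun x => hb _)
  have h2 : ∫ x, (Real.sqrt Real.pi)⁻¹ * g (x - μ) * Real.sign x
      = (Real.sqrt Real.pi)⁻¹ * ∫ x, Real.sign (x + μ) * g x := by
    simp_rw [mul_assoc, mul_comm (g _) (Real.sign _)]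
    rw [integral_const_mul]
    congr 1
    rw [← integral_sub_right_eq_self (fun x => Real.sign (x + μ) * g x) μ]
    simp
  rw [h2]
  -- split the integral at -μ
  have hsplit : (∫ x in Set.Iic (-μ), Real.sign (x + μ) * g x)
      + ∫ x in Set.Ioi (-μ), Real.sign (x + μ) * g x = ∫ x, Real.sign (x + μ) * g x := by
    simpa [Set.compl_Iic] using integral_add_compl measurableSet_Iic hK_int
  have hIoi : ∫ x in Set.Ioi (-μ), Real.sign (x + μ) * g x = ∫ x in Set.Ioi (-μ), g x := by
    refine setIntegral_congr_fun measurableSet_Ioi (fun x hx => ?_)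
    rw [Real.sign_of_pos (by simpa [neg_lt_iff_pos_add] using hx), one_mul]
  have hIic : ∫ x in Set.Iic (-μ), Real.sign (x + μ) * g x = - ∫ x in Set.Iic (-μ), g x := by
    rw [integral_Iic_eq_integral_Iio, integral_Iic_eq_integral_Iio]
    rw [← integral_neg]
    refine setIntegral_congr_fun measurableSet_Iio (fun x hx => ?_)
    have : x + μ < 0 := by
      have : x < -μ := hx
      linarith
    rw [Real.sign_of_neg this]
    ring
  have htot : (∫ x in Set.Iic (-μ), g x) + ∫ x in Set.Ioi (-μ), g x = Real.sqrt Real.pi := by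
    rw [← integral_g]
    simpa [Set.compl_Iic] using integral_add_compl measurableSet_Iic integrable_g
  have hIicval : ∫ x in Set.Iic (-μ), g x
      = Real.sqrt Real.pi / 2 + ∫ t in (0:ℝ)..(-μ), g t := by
    have := intervalIntegral.integral_Iic_sub_Iic (f := g) (μ := volume)
      integrable_g.integrableOn integrable_g.integrableOn (a := 0) (b := -μ)
    rw [integral_g_Iic] at this
    linarith
  have hflip : ∫ t in (0:ℝ)..(-μ), g t = - ∫ t in (0:ℝ)..μ, g t := by
    have h := intervalIntegral.integral_comp_neg (a := (0:ℝ)) (b := μ) (f := g)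
    simp only [hg, neg_sq, neg_zero] at h
    simp only [hg]
    rw [intervalIntegral.integral_symm, ← h]
  have hK : ∫ x, Real.sign (x + μ) * g x = 2 * ∫ t in (0:ℝ)..μ, g t := by
    rw [← hsplit, hIoi, hIic]
    have hIoival : ∫ x in Set.Ioi (-μ), g x
        = Real.sqrt Real.pi - ∫ x in Set.Iic (-μ), g x := by linarith
    rw [hIoival, hIicval, hflip]
    ring
  rw [hK, erf, hg]
  have hpi : Real.sqrt Real.pi ≠ 0 := by
    positivity
  field_simp

/-- If `X ~ N(μ₁, 1/2)` and `Y ~ N(μ₂, 1/2)` are independent, then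
`E[sgn X · sgn Y] = Φ(μ₁) · Φ(μ₂)`. -/
theorem expectation_sign_mul_sign_indep_gaussian (μ₁ μ₂ : ℝ) :
    ∫ p : ℝ × ℝ, Real.sign p.1 * Real.sign p.2
        ∂((gaussianReal μ₁ (1 / 2)).prod (gaussianReal μ₂ (1 / 2))) =
      erf μ₁ * erf μ₂ := by
  rw [integral_prod_mul Real.sign Real.sign, integral_sign_gaussian, integral_sign_gaussian]
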